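/- arXiv:1903.09443 — 5 statements merged into one kernel-verified Lean document; each statement's English description precedes it below -/
import Mathlib

section
/- For every t in ((5-3√3)/2, 0), the points α(t) and β(t) satisfy 1 < α(t) < β(t), and β(t) - α(t) = 18t²/(-1+t)². -/
open Real Filter Set

noncomputable section

def I6 : Set ℝ := Set.Ioo ((5 - 3 * Real.sqrt 3) / 2) 0

def w (t : ℝ) : ℝ := Real.sqrt ((-1 + t) * t * (1 + t + 7 * t ^ 2))

def b0 (t : ℝ) : ℝ :=
  2 * Real.sqrt 3 * (-1 + t) ^ 2 * w t *
    (1 - 6*t + 18*t^2 - 16*t^3 - 252*t^4 + 2592*t^5 - 5844*t^6 + 20448*t^7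
      - 15768*t^8 - 219280*t^9 + 942576*t^10 - 893232*t^11 + 2825968*t^12)
    / ((1 + 2*t) ^ 5 * (-1 + 4*t) ^ 3 * (1 - 2*t + 10*t^2) ^ 4)

def b1 (t : ℝ) : ℝ :=
  (-5 + 6*t - 24*t^2 - 4*t^3) *
    (1 - 12*t^2 + 116*t^3 - 756*t^4 + 2520*t^5 + 1212*t^6 - 12744*t^7
      + 69840*t^8 - 309280*t^9 + 700704*t^10 - 709008*t^11 + 788848*t^12)
    / ((1 - 4*t) ^ 2 * (1 + 2*t) ^ 5 * (1 - 2*t + 10*t^2) ^ 4)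

def b2 (t : ℝ) : ℝ :=
  2 * Real.sqrt 3 * (-1 + t) ^ 2 * w t *
    (13 - 102*t + 390*t^2 - 880*t^3 - 288*t^4 + 19296*t^5 - 102792*t^6
      + 390816*t^7 - 939024*t^8 + 1167536*t^9 - 258720*t^10 - 339888*t^11
      + 2720848*t^12)
    / ((1 + 2*t) ^ 5 * (1 - 4*t) ^ 3 * (1 - 2*t + 10*t^2) ^ 4)

def b3 (t : ℝ) : ℝ :=
  -4 * (-1 + t) ^ 5 *
    (5 + 3*t - 6*t^2 + 564*t^3 - 3408*t^4 + 13296*t^5 - 35136*t^6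
      + 107976*t^7 - 130416*t^8 + 243952*t^9)
    / ((1 - 4*t) ^ 2 * (1 + 6*t^2 + 20*t^3) ^ 4)

def b4 (t : ℝ) : ℝ :=
  8 * Real.sqrt 3 * (1 - t) ^ 7 * w t *
    (7 - 25*t + 66*t^2 - 146*t^3 - 64*t^4 + 2580*t^5 - 6800*t^6 + 26252*t^7)
    / ((1 + 2*t) ^ 5 * (-1 + 4*t) ^ 3 * (1 - 2*t + 10*t^2) ^ 4)

def b5 (t : ℝ) : ℝ :=
  -16 * (-1 + t) ^ 10 * (1 + t + 7*t^2) * (1 + 6*t + 12*t^2 + 116*t^3)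
    / ((1 + 2*t) ^ 5 * (1 - 4*t) ^ 2 * (1 - 2*t + 10*t^2) ^ 4)

def b6 (t : ℝ) : ℝ :=
  -32 * Real.sqrt 3 * (-1 + t) ^ 12 * (1 + t + 7*t^2) * w t
    / ((1 + 2*t) ^ 5 * (-1 + 4*t) ^ 3 * (1 - 2*t + 10*t^2) ^ 4)

def Z (t x : ℝ) : ℝ :=
  b0 t + b1 t * x + b2 t * x ^ 2 + b3 t * x ^ 3 + b4 t * x ^ 4
    + b5 t * x ^ 5 + b6 t * x ^ 6

def alphaZ (t : ℝ) : ℝ :=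
  -9 * t ^ 2 / (-1 + t) ^ 2
    + (1 + 2*t) * (1 - 4*t) * (1 - 2*t + 10*t^2)
      / (2 * Real.sqrt 3 * (-1 + t) ^ 2 * w t)

def betaZ (t : ℝ) : ℝ := alphaZ t + 18 * t ^ 2 / (-1 + t) ^ 2

def gammaZ (t : ℝ) : ℝ :=
  (1 - 4*t) * (5 - 6*t + 24*t^2 + 4*t^3)
    / (12 * Real.sqrt 3 * (-1 + t) ^ 2 * w t)

def sZ (t : ℝ) : ℝ :=
  (1 - 4*t) * (1 + 6*t + 12*t^2 + 116*t^3) * w t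
    / (12 * Real.sqrt 3 * (-1 + t) ^ 3 * t * (1 + t + 7*t^2))

def AZ (t : ℝ) : ℝ :=
  (-1 + 4*t) * ((1 + 2*t) - (Real.sqrt 3 / w t) * t * (1 + t + 16*t^2))
    / (4 * (-1 + t) ^ 2)

def CZ (t : ℝ) : ℝ :=
  (1 - 4*t) * ((1 + 2*t) + (Real.sqrt 3 / w t) * t * (1 + t + 16*t^2))
    / (4 * (-1 + t) ^ 2)

def radB (t : ℝ) : ℝ :=
  (2 * Real.sqrt 3 * w t * (1 + 2*t) * (-1 + 4*t)
    + (5 - 26*t + 102*t^2 - 200*t^3 + 524*t^4)) / (1 + t + 7*t^2)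

def radD (t : ℝ) : ℝ :=
  (-2 * Real.sqrt 3 * w t * (1 + 2*t) * (-1 + 4*t)
    + (5 - 26*t + 102*t^2 - 200*t^3 + 524*t^4)) / (1 + t + 7*t^2)

def BZ (t : ℝ) : ℝ := (1 + 2*t) / (4 * (-1 + t) ^ 2) * Real.sqrt (radB t)

def DZ (t : ℝ) : ℝ := (1 + 2*t) / (4 * (-1 + t) ^ 2) * Real.sqrt (radD t)

def z1 (t : ℝ) : ℝ := AZ t - BZ t
def z2 (t : ℝ) : ℝ := CZ t - DZ t
def z3 (t : ℝ) : ℝ := AZ t + BZ t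
def z4 (t : ℝ) : ℝ := CZ t + DZ t

theorem stmt5 : ∀ t ∈ I6,
    1 < alphaZ t ∧ alphaZ t < betaZ t ∧
      betaZ t - alphaZ t = 18 * t ^ 2 / (-1 + t) ^ 2 := by
  intro t ht
  obtain ⟨htl, htr⟩ := ht
  have hs3 : (Real.sqrt 3) ^ 2 = 3 := Real.sq_sqrt (by norm_num)
  have hs3pos : 0 < Real.sqrt 3 := Real.sqrt_pos.mpr (by norm_num)
  have h7 : 0 < 1 + t + 7 * t ^ 2 := by nlinarith [sq_nonneg (1 + 14 * t)]
  have harg : 0 < (-1 + t) * t * (1 + t + 7 * t ^ 2) := by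
    have h1 : -1 + t < 0 := by linarith
    have : 0 < (-1 + t) * t := mul_pos_of_neg_of_neg h1 htr
    exact mul_pos this h7
  have hwpos : 0 < w t := Real.sqrt_pos.mpr harg
  have hw2 : (w t) ^ 2 = (-1 + t) * t * (1 + t + 7 * t ^ 2) :=
    Real.sq_sqrt harg.le
  have he : (0:ℝ) < (-1 + t) ^ 2 := by nlinarith [sq_nonneg t]
  -- from t > (5-3√3)/2 and t < 0 : 2t²-10t-1 < 0
  have hquad : 2 * t ^ 2 - 10 * t - 1 < 0 := by
    have h1 : -3 * Real.sqrt 3 < 2 * t - 5 := by linarith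
    have h2 : 2 * t - 5 < 0 := by linarith
    nlinarith [hs3, hs3pos]
  have h10 : -10 * t ^ 2 + 2 * t - 1 < 0 := by nlinarith [sq_nonneg t]
  have hP : 0 < (1 + 2 * t) * (1 - 4 * t) := by nlinarith
  have hkey : 2 * Real.sqrt 3 * w t < (1 + 2 * t) * (1 - 4 * t) := by
    have hb : 0 < 2 * Real.sqrt 3 * w t := by positivity
    have hsq : (2 * Real.sqrt 3 * w t) ^ 2 < ((1 + 2 * t) * (1 - 4 * t)) ^ 2 := by
      have : (2 * Real.sqrt 3 * w t) ^ 2 = 12 * ((-1 + t) * t * (1 + t + 7 * t ^ 2)) := by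
        rw [mul_pow, mul_pow, hs3, hw2]; ring
      rw [this]
      nlinarith [mul_pos_of_neg_of_neg hquad h10]
    nlinarith [hsq, hb, hP]
  have hQ : 0 < 1 - 2 * t + 10 * t ^ 2 := by nlinarith [sq_nonneg t]
  have hD : 0 < 2 * Real.sqrt 3 * (-1 + t) ^ 2 * w t := by positivity
  have heq : alphaZ t - 1 =
      ((1 - 2 * t + 10 * t ^ 2) * ((1 + 2 * t) * (1 - 4 * t) - 2 * Real.sqrt 3 * w t))
        / (2 * Real.sqrt 3 * (-1 + t) ^ 2 * w t) := by
    unfold alphaZ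
    have h1t : -1 + t ≠ 0 := by linarith
    field_simp
    ring
  have h1 : 1 < alphaZ t := by
    have : 0 < alphaZ t - 1 := by
      rw [heq]
      exact div_pos (mul_pos hQ (by linarith)) hD
    linarith
  have hdiff : betaZ t - alphaZ t = 18 * t ^ 2 / (-1 + t) ^ 2 := by
    unfold betaZ; ring
  refine ⟨h1, ?_, hdiff⟩
  have ht2 : 0 < 18 * t ^ 2 / (-1 + t) ^ 2 := by
    apply div_pos _ he
    nlinarith [mul_pos_of_neg_of_neg htr htr]
  linarith [hdiff]
end
end

section
/- For every t in ((5-3√3)/2, 0), the derivative of the sextic Zolotarev polynomial vanishes at γ(t): Z'_{6,t}(γ(t)) = 0. -/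
open Real Filter Set

noncomputable section

lemma Z_hasDerivAt (t x : ℝ) :
    HasDerivAt (Z t)
      (b1 t + 2*b2 t*x + 3*b3 t*x^2 + 4*b4 t*x^3 + 5*b5 t*x^4 + 6*b6 t*x^5) x := by
  have hp : ∀ (n:ℕ) (c:ℝ), HasDerivAt (fun y:ℝ => c * y^n) (c*(n*x^(n-1))) x :=
    fun n c => (hasDerivAt_pow n x).const_mul c
  have h := ((((((hasDerivAt_const x (b0 t)).add ((hasDerivAt_id x).const_mul (b1 t))).add
    (hp 2 (b2 t))).add (hp 3 (b3 t))).add (hp 4 (b4 t))).add (hp 5 (b5 t))).add (hp 6 (b6 t))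
  have hfun : Z t = fun y : ℝ => b0 t + b1 t * id y + b2 t * y ^ 2 + b3 t * y ^ 3
      + b4 t * y ^ 4 + b5 t * y ^ 5 + b6 t * y ^ 6 := rfl
  rw [hfun]
  refine h.congr_deriv ?_
  push_cast
  ring

set_option maxHeartbeats 40000000 in
theorem stmt7 : ∀ t ∈ I6, deriv (Z t) (gammaZ t) = 0 := by
  intro t ht
  obtain ⟨hl, hr⟩ := ht
  have hS2 : Real.sqrt 3 ^ 2 = 3 := Real.sq_sqrt (by norm_num)
  have hSpos : (0:ℝ) < Real.sqrt 3 := Real.sqrt_pos.mpr (by norm_num)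
  have hSlt : Real.sqrt 3 < 2 := by nlinarith
  have h0 : t < 0 := hr
  have hm : -(1:ℝ)/2 < t := by nlinarith
  have h1 : (0:ℝ) < 1 + 2*t := by linarith
  have h2 : -1 + 4*t < 0 := by linarith
  have h3 : (0:ℝ) < 1 - 4*t := by linarith
  have h4 : (0:ℝ) < 1 - 2*t + 10*t^2 := by nlinarith
  have h5 : (0:ℝ) < 1 + 6*t^2 + 20*t^3 := by nlinarith [mul_pos h1 h4]
  have h6 : -1 + t < 0 := by linarith
  have hq : (0:ℝ) < (-1 + t) * t * (1 + t + 7*t^2) := by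
    have hq1 : (0:ℝ) < 1 + t + 7*t^2 := by nlinarith
    have hq2 : (0:ℝ) < (-1 + t) * t := mul_pos_of_neg_of_neg h6 h0
    exact mul_pos hq2 hq1
  have hwpos : 0 < w t := Real.sqrt_pos.mpr hq
  have hW2 : w t ^ 2 = (-1 + t) * t * (1 + t + 7*t^2) := Real.sq_sqrt hq.le
  have hS3 : Real.sqrt 3 ^ 3 = 3 * Real.sqrt 3 := by
    rw [pow_succ, hS2]
  have hS4 : Real.sqrt 3 ^ 4 = 9 := by
    rw [show (4:ℕ) = 2*2 from rfl, pow_mul, hS2]; norm_num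
  have hS5 : Real.sqrt 3 ^ 5 = 9 * Real.sqrt 3 := by
    rw [pow_succ, hS4]
  have hS6 : Real.sqrt 3 ^ 6 = 27 := by
    rw [pow_succ, hS5]; nlinarith
  have hW3 : w t ^ 3 = ((-1 + t) * t * (1 + t + 7*t^2)) * w t := by
    rw [pow_succ, hW2]
  have hW4 : w t ^ 4 = ((-1 + t) * t * (1 + t + 7*t^2))^2 := by
    rw [show (4:ℕ) = 2*2 from rfl, pow_mul, hW2]
  have hW5 : w t ^ 5 = ((-1 + t) * t * (1 + t + 7*t^2))^2 * w t := by
    rw [pow_succ, hW4]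
  have hW6 : w t ^ 6 = ((-1 + t) * t * (1 + t + 7*t^2))^3 := by
    rw [pow_succ, hW5, mul_assoc, ← pow_two, hW2]; ring
  have hS8 : Real.sqrt 3 ^ 8 = 81 := by
    rw [show (8:ℕ) = 2*4 from rfl, pow_mul, hS2]; norm_num
  have hS7 : Real.sqrt 3 ^ 7 = 27 * Real.sqrt 3 := by
    rw [pow_succ, hS6]
  have hS9 : Real.sqrt 3 ^ 9 = 81 * Real.sqrt 3 := by
    rw [pow_succ, hS8]
  have hS10 : Real.sqrt 3 ^ 10 = 243 := by
    rw [show (10:ℕ) = 2*5 from rfl, pow_mul, hS2]; norm_num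
  have hS11 : Real.sqrt 3 ^ 11 = 243 * Real.sqrt 3 := by
    rw [pow_succ, hS10]
  have hS12 : Real.sqrt 3 ^ 12 = 729 := by
    rw [show (12:ℕ) = 2*6 from rfl, pow_mul, hS2]; norm_num
  have hW8 : w t ^ 8 = ((-1 + t) * t * (1 + t + 7*t^2))^4 := by
    rw [show (8:ℕ) = 2*4 from rfl, pow_mul, hW2]
  have hW7 : w t ^ 7 = ((-1 + t) * t * (1 + t + 7*t^2))^3 * w t := by
    rw [pow_succ, hW6]
  have hW9 : w t ^ 9 = ((-1 + t) * t * (1 + t + 7*t^2))^4 * w t := by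
    rw [pow_succ, hW8]
  have hW10 : w t ^ 10 = ((-1 + t) * t * (1 + t + 7*t^2))^5 := by
    rw [show (10:ℕ) = 2*5 from rfl, pow_mul, hW2]
  have hW11 : w t ^ 11 = ((-1 + t) * t * (1 + t + 7*t^2))^5 * w t := by
    rw [pow_succ, hW10]
  have hW12 : w t ^ 12 = ((-1 + t) * t * (1 + t + 7*t^2))^6 := by
    rw [show (12:ℕ) = 2*6 from rfl, pow_mul, hW2]
  rw [(Z_hasDerivAt t (gammaZ t)).deriv]
  unfold b1 b2 b3 b4 b5 b6 gammaZ
  have h1' : (1:ℝ) + 2*t ≠ 0 := ne_of_gt h1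
  have h2' : (-1:ℝ) + 4*t ≠ 0 := ne_of_lt h2
  have h3' : (1:ℝ) - 4*t ≠ 0 := ne_of_gt h3
  have h4' : (1:ℝ) - 2*t + 10*t^2 ≠ 0 := ne_of_gt h4
  have h5' : (1:ℝ) + 6*t^2 + 20*t^3 ≠ 0 := ne_of_gt h5
  have h6' : (-1:ℝ) + t ≠ 0 := ne_of_lt h6
  have hw' : w t ≠ 0 := ne_of_gt hwpos
  have hs' : Real.sqrt 3 ≠ 0 := ne_of_gt hSpos
  have n1 : (1:ℝ) + t*2 ≠ 0 := by linarith
  have n2 : (-1:ℝ) + t*4 ≠ 0 := by linarith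
  have n3 : (1:ℝ) - t*4 ≠ 0 := by linarith
  have n4 : (1:ℝ) - t*2 + t^2*10 ≠ 0 := by nlinarith
  have n5 : (1:ℝ) + 6*t^2 + t^3*20 ≠ 0 := by nlinarith
  field_simp
  ring_nf
  simp only [hS2, hS3, hS4, hS5, hS6, hS7, hS8, hS9, hS10, hS11, hS12, hW2, hW3, hW4, hW5, hW6, hW7, hW8, hW9, hW10, hW11, hW12]
  ring
end
end

section
/- For every t in ((5-3√3)/2, 0), the equioscillation points satisfy the first Peherstorfer–Schiefermayr equation: α(t)+β(t)+2(z₁(t)+z₂(t)+z₃(t)+z₄(t)) = (1-4t)(1+6t+12t²+116t³)/(√3(-1+t)²ω). -/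
open Real Filter Set

noncomputable section

theorem stmt12 : ∀ t ∈ I6,
    alphaZ t + betaZ t + 2 * (z1 t + z2 t + z3 t + z4 t)
      = (1 - 4*t) * (1 + 6*t + 12*t^2 + 116*t^3)
          / (Real.sqrt 3 * (-1 + t) ^ 2 * w t) := by
  intro t ht
  obtain ⟨ht1, ht2⟩ := ht
  have h3 : (0:ℝ) < Real.sqrt 3 := Real.sqrt_pos.mpr (by norm_num)
  have hm1 : -1 + t < 0 := by linarith
  have hq : 0 < 1 + t + 7 * t ^ 2 := by nlinarith [sq_nonneg (1 + 14*t)]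
  have hwpos : 0 < w t := by
    apply Real.sqrt_pos.mpr
    have : 0 < (-1 + t) * t := mul_pos_of_neg_of_neg hm1 ht2
    positivity
  have hwne : w t ≠ 0 := ne_of_gt hwpos
  have hmne : ((-1 + t) : ℝ) ≠ 0 := by linarith
  have hsq : Real.sqrt 3 * Real.sqrt 3 = 3 := Real.mul_self_sqrt (by norm_num)
  have key : Real.sqrt 3 / w t = 3 / (Real.sqrt 3 * w t) := by
    rw [div_eq_div_iff hwne (by positivity)]
    calc Real.sqrt 3 * (Real.sqrt 3 * w t) = (Real.sqrt 3 * Real.sqrt 3) * w t := by ring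
    _ = 3 * w t := by rw [hsq]
  simp only [z1, z2, z3, z4, alphaZ, betaZ, AZ, CZ, key]
  have hu : Real.sqrt 3 * w t ≠ 0 := by positivity
  set u := Real.sqrt 3 * w t with hud
  have h2u : 2 * Real.sqrt 3 * (-1 + t) ^ 2 * w t = 2 * (-1 + t) ^ 2 * u := by
    rw [hud]; ring
  rw [h2u, show Real.sqrt 3 * (-1 + t) ^ 2 * w t = (-1 + t) ^ 2 * u by rw [hud]; ring]
  field_simp
  ring
end
end

section
/- As t → 0⁻, the coefficients of the sextic Zolotarev polynomial Z_{6,t} converge to those of -T₅, i.e. lim_{t→0⁻} Z_{6,t}(x) = -(5x - 20x³ + 16x⁵) pointwise in x; in particular b₆(t) → 0, b₄(t) → 0, b₂(t) → 0, b₀(t) → 0, b₅(t) → -16, b₃(t) → 20, b₁(t) → -5. -/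
open Real Filter Set

noncomputable section

lemma contw : ContinuousAt w 0 := by
  unfold w; fun_prop

lemma contAux (f : ℝ → ℝ) (c : ℝ) (hc : ContinuousAt f 0) (hv : f 0 = c) :
    Tendsto f (nhdsWithin 0 (Set.Iio 0)) (nhds c) := by
  subst hv
  exact hc.tendsto.mono_left nhdsWithin_le_nhds

lemma w0 : w 0 = 0 := by simp [w]

theorem stmt15 :
    (∀ x : ℝ, Tendsto (fun t => Z t x) (nhdsWithin 0 (Set.Iio 0))
      (nhds (-(5 * x - 20 * x ^ 3 + 16 * x ^ 5)))) ∧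
    Tendsto b6 (nhdsWithin 0 (Set.Iio 0)) (nhds 0) ∧
    Tendsto b4 (nhdsWithin 0 (Set.Iio 0)) (nhds 0) ∧
    Tendsto b2 (nhdsWithin 0 (Set.Iio 0)) (nhds 0) ∧
    Tendsto b0 (nhdsWithin 0 (Set.Iio 0)) (nhds 0) ∧
    Tendsto b5 (nhdsWithin 0 (Set.Iio 0)) (nhds (-16)) ∧
    Tendsto b3 (nhdsWithin 0 (Set.Iio 0)) (nhds 20) ∧
    Tendsto b1 (nhdsWithin 0 (Set.Iio 0)) (nhds (-5)) := by
  have hw := contw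
  have h0 : Tendsto b0 (nhdsWithin 0 (Set.Iio 0)) (nhds 0) := by
    apply contAux
    · unfold b0
      exact ContinuousAt.div (by fun_prop) (by fun_prop) (by norm_num)
    · simp [b0, w0]
  have h1 : Tendsto b1 (nhdsWithin 0 (Set.Iio 0)) (nhds (-5)) := by
    apply contAux
    · unfold b1
      exact ContinuousAt.div (by fun_prop) (by fun_prop) (by norm_num)
    · norm_num [b1]
  have h2 : Tendsto b2 (nhdsWithin 0 (Set.Iio 0)) (nhds 0) := by
    apply contAux
    · unfold b2
      exact ContinuousAt.div (by fun_prop) (by fun_prop) (by norm_num)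
    · simp [b2, w0]
  have h3 : Tendsto b3 (nhdsWithin 0 (Set.Iio 0)) (nhds 20) := by
    apply contAux
    · unfold b3
      exact ContinuousAt.div (by fun_prop) (by fun_prop) (by norm_num)
    · norm_num [b3]
  have h4 : Tendsto b4 (nhdsWithin 0 (Set.Iio 0)) (nhds 0) := by
    apply contAux
    · unfold b4
      exact ContinuousAt.div (by fun_prop) (by fun_prop) (by norm_num)
    · simp [b4, w0]
  have h5 : Tendsto b5 (nhdsWithin 0 (Set.Iio 0)) (nhds (-16)) := by
    apply contAux
    · unfold b5
      exact ContinuousAt.div (by fun_prop) (by fun_prop) (by norm_num)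
    · norm_num [b5]
  have h6 : Tendsto b6 (nhdsWithin 0 (Set.Iio 0)) (nhds 0) := by
    apply contAux
    · unfold b6
      exact ContinuousAt.div (by fun_prop) (by fun_prop) (by norm_num)
    · simp [b6, w0]
  refine ⟨?_, h6, h4, h2, h0, h5, h3, h1⟩
  intro x
  have hZ : Tendsto (fun t => Z t x) (nhdsWithin 0 (Set.Iio 0))
      (nhds (0 + (-5) * x + 0 * x ^ 2 + 20 * x ^ 3 + 0 * x ^ 4
        + (-16) * x ^ 5 + 0 * x ^ 6)) := by
    unfold Z
    exact (((((h0.add (h1.mul_const x)).add (h2.mul_const (x ^ 2))).add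
      (h3.mul_const (x ^ 3))).add (h4.mul_const (x ^ 4))).add
      (h5.mul_const (x ^ 5))).add (h6.mul_const (x ^ 6))
  have he : (0:ℝ) + (-5) * x + 0 * x ^ 2 + 20 * x ^ 3 + 0 * x ^ 4
        + (-16) * x ^ 5 + 0 * x ^ 6 = -(5 * x - 20 * x ^ 3 + 16 * x ^ 5) := by ring
  rwa [he] at hZ
end
end

section
/- As t → ((5-3√3)/2)⁺, Z_{6,t}(x) converges pointwise to T₆((x+1)(2+√3)/4 - 1), where T₆(x) = -1+18x²-48x⁴+32x⁶. -/
open Real Filter Set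

noncomputable section

lemma hsq6 : Real.sqrt 3 ^ 2 = 3 := Real.sq_sqrt (by norm_num)
lemma hslb6 : (3:ℝ)/2 < Real.sqrt 3 := by nlinarith [hsq6, Real.sqrt_nonneg 3]
lemma hsub6 : Real.sqrt 3 ≤ 97/56 := by nlinarith [hsq6, sq_nonneg (Real.sqrt 3 - 7/4)]
lemma hd1 : (1 + 2 * ((5 - 3 * Real.sqrt 3) / 2) : ℝ) ≠ 0 := ne_of_gt (by nlinarith [hsub6])
lemma hd2 : (-1 + 4 * ((5 - 3 * Real.sqrt 3) / 2) : ℝ) ≠ 0 := ne_of_lt (by nlinarith [hslb6])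
lemma hd2' : (1 - 4 * ((5 - 3 * Real.sqrt 3) / 2) : ℝ) ≠ 0 := ne_of_gt (by nlinarith [hslb6])
lemma hd3 : (1 - 2 * ((5 - 3 * Real.sqrt 3) / 2) + 10 * ((5 - 3 * Real.sqrt 3) / 2) ^ 2 : ℝ) ≠ 0 := ne_of_gt (by nlinarith [hsq6, hsub6])
lemma hd4 : (1 + 6 * ((5 - 3 * Real.sqrt 3) / 2) ^ 2 + 20 * ((5 - 3 * Real.sqrt 3) / 2) ^ 3 : ℝ) ≠ 0 := by
  have h : (1 + 6 * ((5 - 3 * Real.sqrt 3) / 2) ^ 2 + 20 * ((5 - 3 * Real.sqrt 3) / 2) ^ 3 : ℝ)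
      = (1 + 2 * ((5 - 3 * Real.sqrt 3) / 2)) * (1 - 2 * ((5 - 3 * Real.sqrt 3) / 2) + 10 * ((5 - 3 * Real.sqrt 3) / 2) ^ 2) := by ring
  rw [h]; exact mul_ne_zero hd1 hd3
lemma hw6 : w ((5 - 3 * Real.sqrt 3) / 2) = 63/2 - 18 * Real.sqrt 3 := by
  unfold w
  rw [show ((-1 + ((5 - 3 * Real.sqrt 3) / 2)) * ((5 - 3 * Real.sqrt 3) / 2) * (1 + ((5 - 3 * Real.sqrt 3) / 2) + 7 * ((5 - 3 * Real.sqrt 3) / 2) ^ 2) : ℝ)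
      = (63/2 - 18 * Real.sqrt 3) ^ 2 from by linear_combination ((4347/16 : ℝ) + (-216 : ℝ) * Real.sqrt 3 + (567/16 : ℝ) * Real.sqrt 3 ^ 2) * hsq6]
  exact Real.sqrt_sq (by nlinarith [hsub6])
lemma hb0v : b0 ((5 - 3 * Real.sqrt 3) / 2) = (-97/128) + (-3/32) * Real.sqrt 3 := by
  unfold b0
  rw [hw6]
  rw [div_eq_iff (mul_ne_zero (mul_ne_zero (pow_ne_zero 5 hd1) (pow_ne_zero 3 hd2)) (pow_ne_zero 4 hd3))]
  linear_combination ((-1073316308873913/64 : ℝ) + (152185293230309343/1024 : ℝ) * Real.sqrt 3 + (-156691445163576075/256 : ℝ) * Real.sqrt 3 ^ 2 + (397568411125177887/256 : ℝ) * Real.sqrt 3 ^ 3 + (-2777772499396169733/1024 : ℝ) * Real.sqrt 3 ^ 4 + (7069337159973298803/2048 : ℝ) * Real.sqrt 3 ^ 5 + (-1690340739980866407/512 : ℝ) * Real.sqrt 3 ^ 6 + (4941405901750892103/2048 : ℝ) * Real.sqrt 3 ^ 7 + (-347011469905552767/256 : ℝ) * Real.sqrt 3 ^ 8 + (1195261635220609941/2048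 : ℝ) * Real.sqrt 3 ^ 9 + (-97366343515867323/512 : ℝ) * Real.sqrt 3 ^ 10 + (93685024525660173/2048 : ℝ) * Real.sqrt 3 ^ 11 + (-7964211558670479/1024 : ℝ) * Real.sqrt 3 ^ 12 + (885719129223123/1024 : ℝ) * Real.sqrt 3 ^ 13 + (-3451787416827/64 : ℝ) * Real.sqrt 3 ^ 14 + (80712601875/64 : ℝ) * Real.sqrt 3 ^ 15) * hsq6
lemma hb1v : b1 ((5 - 3 * Real.sqrt 3) / 2) = (-99/64) + (-3/8) * Real.sqrt 3 := by
  unfold b1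
  rw [div_eq_iff (mul_ne_zero (mul_ne_zero (pow_ne_zero 2 hd2') (pow_ne_zero 5 hd1)) (pow_ne_zero 4 hd3))]
  linear_combination ((-713085678539469/512 : ℝ) + (5826346180495281/512 : ℝ) * Real.sqrt 3 + (-1381878476552709/32 : ℝ) * Real.sqrt 3 ^ 2 + (25829443341489519/256 : ℝ) * Real.sqrt 3 ^ 3 + (-20758897297243215/128 : ℝ) * Real.sqrt 3 ^ 4 + (194310150878751849/1024 : ℝ) * Real.sqrt 3 ^ 5 + (-85354276666427379/512 : ℝ) * Real.sqrt 3 ^ 6 + (114431874236654769/1024 : ℝ) * Real.sqrt 3 ^ 7 + (-14709000555225873/256 : ℝ) * Real.sqrt 3 ^ 8 + (23099881010375475/1024 : ℝ) * Real.sqrt 3 ^ 9 + (-3410229351881529/512 : ℝ) * Real.sqrt 3 ^ 10 + (1469335265602407/1024 : ℝ) * Real.sqrt 3 ^ 11 + (-109226678120865/512 : ℝ) * Real.sqrt 3 ^ 12 + (10037820938571/512 : ℝ) * Real.sqrt 3 ^ 13 + (-26904200625/32 : ℝ) * Real.sqrt 3 ^ 14) * hsq6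
lemma hb2v : b2 ((5 - 3 * Real.sqrt 3) / 2) = (969/128) + (129/32) * Real.sqrt 3 := by
  unfold b2
  rw [hw6]
  rw [div_eq_iff (mul_ne_zero (mul_ne_zero (pow_ne_zero 5 hd1) (pow_ne_zero 3 hd2')) (pow_ne_zero 4 hd3))]
  linear_combination ((-10722097972152801/64 : ℝ) + (1517717056684300749/1024 : ℝ) * Real.sqrt 3 + (-48922804739433753/8 : ℝ) * Real.sqrt 3 ^ 2 + (3995880480513397863/256 : ℝ) * Real.sqrt 3 ^ 3 + (-28221509998117256841/1024 : ℝ) * Real.sqrt 3 ^ 4 + (73018715554243202247/2048 : ℝ) * Real.sqrt 3 ^ 5 + (-17872786208046484881/512 : ℝ) * Real.sqrt 3 ^ 6 + (53936504996684741055/2048 : ℝ) * Real.sqrt 3 ^ 7 + (-15434736029291844 : ℝ) * Real.sqrt 3 ^ 8 + (14388943042100442177/2048 : ℝ) * Real.sqrt 3 ^ 9 + (-1261226233068747435/512 : ℝ) * Real.sqrt 3 ^ 10 + (1337688017821549557/2048 : ℝ) * Real.sqrt 3 ^ 11 + (-129805770986360055/1024 : ℝ) * Real.sqrt 3 ^ 12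 + (17403325988441877/1024 : ℝ) * Real.sqrt 3 ^ 13 + (-180122073502419/128 : ℝ) * Real.sqrt 3 ^ 14 + (3470641880625/64 : ℝ) * Real.sqrt 3 ^ 15) * hsq6
lemma hb3v : b3 ((5 - 3 * Real.sqrt 3) / 2) = (163/32) + (3) * Real.sqrt 3 := by
  unfold b3
  rw [div_eq_iff (mul_ne_zero (pow_ne_zero 2 hd2') (pow_ne_zero 4 hd4))]
  linear_combination ((536452096957983/256 : ℝ) + (-2059477428374361/128 : ℝ) * Real.sqrt 3 + (1824628408340337/32 : ℝ) * Real.sqrt 3 ^ 2 + (-15806729113960941/128 : ℝ) * Real.sqrt 3 ^ 3 + (93365555342435343/512 : ℝ) * Real.sqrt 3 ^ 4 + (-24817228184537883/128 : ℝ) * Real.sqrt 3 ^ 5 + (78184264248803259/512 : ℝ) * Real.sqrt 3 ^ 6 + (-11546426149361937/128 : ℝ) * Real.sqrt 3 ^ 7 + (20463979935697929/512 : ℝ) * Real.sqrt 3 ^ 8 + (-209913188122377/16 : ℝ) * Real.sqrt 3 ^ 9 + (1587805476131889/512 : ℝ) * Real.sqrt 3 ^ 10 + (-31995723738159/64 :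 ℝ) * Real.sqrt 3 ^ 11 + (12612703601907/256 : ℝ) * Real.sqrt 3 ^ 12 + (-8968066875/4 : ℝ) * Real.sqrt 3 ^ 13) * hsq6
lemma hb4v : b4 ((5 - 3 * Real.sqrt 3) / 2) = (-2223/128) + (-321/32) * Real.sqrt 3 := by
  unfold b4
  rw [hw6]
  rw [div_eq_iff (mul_ne_zero (mul_ne_zero (pow_ne_zero 5 hd1) (pow_ne_zero 3 hd2)) (pow_ne_zero 4 hd3))]
  linear_combination ((-24597754171409367/64 : ℝ) + (3481284192188526837/1024 : ℝ) * Real.sqrt 3 + (-3591825826789447083/256 : ℝ) * Real.sqrt 3 ^ 2 + (9174261291289517079/256 : ℝ) * Real.sqrt 3 ^ 3 + (-64874327949574953795/1024 : ℝ) * Real.sqrt 3 ^ 4 + (168160291354782437589/2048 : ℝ) * Real.sqrt 3 ^ 5 + (-41264633303949939381/512 : ℝ) * Real.sqrt 3 ^ 6 + (124941469574727837513/2048 : ℝ) * Real.sqrt 3 ^ 7 + (-9191572267038108327/256 : ℝ) * Real.sqrt 3 ^ 8 + (33647167186061812659/2048 : ℝ) * Real.sqrt 3 ^ 9 + (-2968140717697296069/512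 : ℝ) * Real.sqrt 3 ^ 10 + (3172418439662214387/2048 : ℝ) * Real.sqrt 3 ^ 11 + (-310688723262822705/1024 : ℝ) * Real.sqrt 3 ^ 12 + (42111690474376305/1024 : ℝ) * Real.sqrt 3 ^ 13 + (-110373471466119/32 : ℝ) * Real.sqrt 3 ^ 14 + (8636248400625/64 : ℝ) * Real.sqrt 3 ^ 15) * hsq6
lemma hb5v : b5 ((5 - 3 * Real.sqrt 3) / 2) = (-291/64) + (-21/8) * Real.sqrt 3 := by
  unfold b5
  rw [div_eq_iff (mul_ne_zero (mul_ne_zero (pow_ne_zero 5 hd1) (pow_ne_zero 2 hd2')) (pow_ne_zero 4 hd3))]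
  linear_combination ((-5724339484956327/512 : ℝ) + (46819824682237281/512 : ℝ) * Real.sqrt 3 + (-44442000179080335/128 : ℝ) * Real.sqrt 3 ^ 2 + (207642387826209861/256 : ℝ) * Real.sqrt 3 ^ 3 + (-333419246116585245/256 : ℝ) * Real.sqrt 3 ^ 4 + (1557110134033678593/1024 : ℝ) * Real.sqrt 3 ^ 5 + (-681558047040846771/512 : ℝ) * Real.sqrt 3 ^ 6 + (908902166425537761/1024 : ℝ) * Real.sqrt 3 ^ 7 + (-7247593509252471/16 : ℝ) * Real.sqrt 3 ^ 8 + (180290662842804867/1024 : ℝ) * Real.sqrt 3 ^ 9 + (-26268269564657997/512 : ℝ) * Real.sqrt 3 ^ 10 + (11129087070052191/1024 : ℝ) * Real.sqrt 3 ^ 11 + (-810023134817835/512 : ℝ) * Real.sqrt 3 ^ 12 + (72525876032871/512 : ℝ) * Real.sqrt 3 ^ 13 + (-188329404375/32 : ℝ) * Real.sqrt 3 ^ 14) * hsq6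
lemma hb6v : b6 ((5 - 3 * Real.sqrt 3) / 2) = (1351/128) + (195/32) * Real.sqrt 3 := by
  unfold b6
  rw [hw6]
  rw [div_eq_iff (mul_ne_zero (mul_ne_zero (pow_ne_zero 5 hd1) (pow_ne_zero 3 hd2)) (pow_ne_zero 4 hd3))]
  linear_combination ((14948972508130479/64 : ℝ) + (-2115752428734535431/1024 : ℝ) * Real.sqrt 3 + (1091493760145571531/128 : ℝ) * Real.sqrt 3 ^ 2 + (-5575949221901297103/256 : ℝ) * Real.sqrt 3 ^ 3 + (39430590450853866687/1024 : ℝ) * Real.sqrt 3 ^ 4 + (-102210912960512534145/2048 : ℝ) * Real.sqrt 3 ^ 5 + (25082187835884320907/512 : ℝ) * Real.sqrt 3 ^ 6 + (-75946370479793988561/2048 : ℝ) * Real.sqrt 3 ^ 7 + (2793645656722474515/128 : ℝ) * Real.sqrt 3 ^ 8 + (-20453485779181980423/2048 : ℝ) * Real.sqrt 3 ^ 9 + (1804280828144415957/512 : ℝ) * Real.sqrt 3 ^ 10 + (-1928415446366325003/2048 : ℝ) * Real.sqrt 3 ^ 11 + (188847163835133129/1024 : ℝ) * Real.sqrt 3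 ^ 12 + (-25594083615157551/1024 : ℝ) * Real.sqrt 3 ^ 13 + (268275387195711/128 : ℝ) * Real.sqrt 3 ^ 14 + (-5246319121875/64 : ℝ) * Real.sqrt 3 ^ 15) * hsq6
lemma hb0c : ContinuousAt b0 ((5 - 3 * Real.sqrt 3) / 2) := by
  unfold b0 w
  exact ContinuousAt.div (by fun_prop) (by fun_prop) (mul_ne_zero (mul_ne_zero (pow_ne_zero 5 hd1) (pow_ne_zero 3 hd2)) (pow_ne_zero 4 hd3))
lemma hb1c : ContinuousAt b1 ((5 - 3 * Real.sqrt 3) / 2) := by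
  unfold b1
  exact ContinuousAt.div (by fun_prop) (by fun_prop) (mul_ne_zero (mul_ne_zero (pow_ne_zero 2 hd2') (pow_ne_zero 5 hd1)) (pow_ne_zero 4 hd3))
lemma hb2c : ContinuousAt b2 ((5 - 3 * Real.sqrt 3) / 2) := by
  unfold b2 w
  exact ContinuousAt.div (by fun_prop) (by fun_prop) (mul_ne_zero (mul_ne_zero (pow_ne_zero 5 hd1) (pow_ne_zero 3 hd2')) (pow_ne_zero 4 hd3))
lemma hb3c : ContinuousAt b3 ((5 - 3 * Real.sqrt 3) / 2) := by
  unfold b3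
  exact ContinuousAt.div (by fun_prop) (by fun_prop) (mul_ne_zero (pow_ne_zero 2 hd2') (pow_ne_zero 4 hd4))
lemma hb4c : ContinuousAt b4 ((5 - 3 * Real.sqrt 3) / 2) := by
  unfold b4 w
  exact ContinuousAt.div (by fun_prop) (by fun_prop) (mul_ne_zero (mul_ne_zero (pow_ne_zero 5 hd1) (pow_ne_zero 3 hd2)) (pow_ne_zero 4 hd3))
lemma hb5c : ContinuousAt b5 ((5 - 3 * Real.sqrt 3) / 2) := by
  unfold b5
  exact ContinuousAt.div (by fun_prop) (by fun_prop) (mul_ne_zero (mul_ne_zero (pow_ne_zero 5 hd1) (pow_ne_zero 2 hd2')) (pow_ne_zero 4 hd3))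
lemma hb6c : ContinuousAt b6 ((5 - 3 * Real.sqrt 3) / 2) := by
  unfold b6 w
  exact ContinuousAt.div (by fun_prop) (by fun_prop) (mul_ne_zero (mul_ne_zero (pow_ne_zero 5 hd1) (pow_ne_zero 3 hd2)) (pow_ne_zero 4 hd3))
theorem stmt16 : ∀ x : ℝ,
    Tendsto (fun t => Z t x)
      (nhdsWithin ((5 - 3 * Real.sqrt 3) / 2) (Set.Ioi ((5 - 3 * Real.sqrt 3) / 2)))
      (nhds (-1 + 18 * ((x + 1) * (2 + Real.sqrt 3) / 4 - 1) ^ 2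
        - 48 * ((x + 1) * (2 + Real.sqrt 3) / 4 - 1) ^ 4
        + 32 * ((x + 1) * (2 + Real.sqrt 3) / 4 - 1) ^ 6)) := by
  intro x
  have hc : ContinuousAt (fun t => Z t x) ((5 - 3 * Real.sqrt 3) / 2) := by
    unfold Z
    exact ((((((hb0c.add (hb1c.mul continuousAt_const)).add
      (hb2c.mul continuousAt_const)).add (hb3c.mul continuousAt_const)).add
      (hb4c.mul continuousAt_const)).add (hb5c.mul continuousAt_const)).add
      (hb6c.mul continuousAt_const))
  have h := hc.tendsto.mono_left (nhdsWithin_le_nhds (s := Set.Ioi ((5 - 3 * Real.sqrt 3) / 2)))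
  have hz : Z ((5 - 3 * Real.sqrt 3) / 2) x
      = -1 + 18 * ((x + 1) * (2 + Real.sqrt 3) / 4 - 1) ^ 2
        - 48 * ((x + 1) * (2 + Real.sqrt 3) / 4 - 1) ^ 4
        + 32 * ((x + 1) * (2 + Real.sqrt 3) / 4 - 1) ^ 6 := by
    unfold Z
    rw [hb0v, hb1v, hb2v, hb3v, hb4v, hb5v, hb6v]
    linear_combination (((75/128 : ℝ) + (1/32 : ℝ) * Real.sqrt 3 + (-39/128 : ℝ) * Real.sqrt 3 ^ 2 + (3/32 : ℝ) * Real.sqrt 3 ^ 3 + (-1/128 : ℝ) * Real.sqrt 3 ^ 4) + ((33/64 : ℝ) + (-15/8 : ℝ) * Real.sqrt 3 + (-21/64 : ℝ) * Real.sqrt 3 ^ 2 + (3/8 : ℝ) * Real.sqrt 3 ^ 3 + (-3/64 : ℝ) * Real.sqrt 3 ^ 4) * x ^ 1 + ((-579/128 : ℝ) + (-75/32 : ℝ) * Real.sqrt 3 + (159/128 : ℝ) * Real.sqrt 3 ^ 2 + (15/32 : ℝ) * Real.sqrt 3 ^ 3 + (-15/128 : ℝ) * Real.sqrt 3 ^ 4)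 * x ^ 2 + ((-33/32 : ℝ) + (3 : ℝ) * Real.sqrt 3 + (69/32 : ℝ) * Real.sqrt 3 ^ 2 + (0 : ℝ) * Real.sqrt 3 ^ 3 + (-5/32 : ℝ) * Real.sqrt 3 ^ 4) * x ^ 3 + ((933/128 : ℝ) + (123/32 : ℝ) * Real.sqrt 3 + (39/128 : ℝ) * Real.sqrt 3 ^ 2 + (-15/32 : ℝ) * Real.sqrt 3 ^ 3 + (-15/128 : ℝ) * Real.sqrt 3 ^ 4) * x ^ 4 + ((33/64 : ℝ) + (-9/8 : ℝ) * Real.sqrt 3 + (-69/64 : ℝ) * Real.sqrt 3 ^ 2 + (-3/8 : ℝ) * Real.sqrt 3 ^ 3 + (-3/64 : ℝ) * Real.sqrt 3 ^ 4) * x ^ 5 + ((-429/128 : ℝ) + (-49/32 : ℝ) * Real.sqrt 3 + (-63/128 : ℝ) * Real.sqrt 3 ^ 2 + (-3/32 : ℝ) * Real.sqrt 3 ^ 3 + (-1/128 : ℝ) * Real.sqrt 3 ^ 4) * x ^ 6) * hsq6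
  rw [hz] at h
  exact h
end
end
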